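/- Let G be a hypomatchable graph and let (H₁,…,H_m) be an ear decomposition of G in which every H_i (1 ≤ i ≤ m) is a cycle. Let i₁,…,i_m be a permutation of 1,…,m such that V(H_{i_l}) ∩ (⋃_{1≤j≤l−1} V(H_{i_j})) ≠ ∅ for each l with 2 ≤ l ≤ m. Then (H_{i₁},…,H_{i_m}) is also an ear decomposition of G. -/

import Mathlib

open SimpleGraph

/-- `G.IsPerfectMatchingOn M s`: `M` is a set of edges of `G` forming a perfect matching of
the induced subgraph of `G` on `s`. -/
def SimpleGraph.IsPerfectMatchingOn {V : Type*} (G : SimpleGraph V)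
    (M : Set (Sym2 V)) (s : Set V) : Prop :=
  M ⊆ G.edgeSet ∧ (∀ e ∈ M, ∀ v ∈ e, v ∈ s) ∧ (∀ v ∈ s, ∃! e, e ∈ M ∧ v ∈ e)

/-- `G` is hypomatchable if `G − x` has a perfect matching for every vertex `x`. -/
def SimpleGraph.Hypomatchable {V : Type*} (G : SimpleGraph V) : Prop :=
  ∀ x : V, ∃ M : Set (Sym2 V), G.IsPerfectMatchingOn M {x}ᶜ

/-- `(H 0, H 1, …, H m)` is an ear decomposition of `G`:
(E0) the `H i` are pairwise edge-disjoint;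
(E1) their vertex sets cover `V(G)`;
(E2) each `H i` has an odd number of edges, at least `3`;
(E3) `H 0` is a cycle;
(E4) for `i ≥ 1`, either `H i` is a path and exactly its endvertices (its vertices of
degree one) lie in `⋃_{j<i} V(H j)`, or `H i` is a cycle meeting `⋃_{j<i} V(H j)` in
exactly one vertex. -/
def IsEarDecomposition {V : Type*} (G : SimpleGraph V) {m : ℕ}
    (H : Fin (m + 1) → G.Subgraph) : Prop :=
  (∀ i j, i ≠ j → Disjoint (H i).edgeSet (H j).edgeSet) ∧
  (⋃ i, (H i).verts) = Set.univ ∧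
  (∀ i, Odd (H i).edgeSet.ncard ∧ 3 ≤ (H i).edgeSet.ncard) ∧
  (∃ n, Nonempty ((H 0).coe ≃g SimpleGraph.cycleGraph n)) ∧
  (∀ i : Fin (m + 1), 0 < i.val →
    ((∃ n, Nonempty ((H i).coe ≃g SimpleGraph.pathGraph n)) ∧
      (∀ v ∈ (H i).verts,
        (v ∈ ⋃ j, ⋃ (_ : j < i), (H j).verts ↔ ((H i).neighborSet v).ncard = 1))) ∨
    ((∃ n, Nonempty ((H i).coe ≃g SimpleGraph.cycleGraph n)) ∧
      ((H i).verts ∩ ⋃ j, ⋃ (_ : j < i), (H j).verts).ncard = 1))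

/-- `P_𝓗(i) = H i − ⋃_{j<i} V(H j)`, as a vertex set. -/
def earPV {V : Type*} {G : SimpleGraph V} {m : ℕ} (H : Fin (m + 1) → G.Subgraph)
    (i : Fin (m + 1)) : Set V :=
  (H i).verts \ ⋃ j, ⋃ (_ : j < i), (H j).verts


lemma count_nat {V : Type*} [Fintype V] (A : ℕ → Set V) (n : ℕ) :
    (⋃ i, ⋃ (_ : i < n), A i).ncard
      + ∑ i ∈ Finset.range n, (A i ∩ ⋃ j, ⋃ (_ : j < i), A j).ncard
      = ∑ i ∈ Finset.range n, (A i).ncard := by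
  induction n with
  | zero => simp
  | succ n ih =>
    rw [Finset.sum_range_succ, Finset.sum_range_succ]
    have hU : (⋃ i, ⋃ (_ : i < n + 1), A i) = (⋃ i, ⋃ (_ : i < n), A i) ∪ A n := by
      ext x
      simp only [Set.mem_iUnion, Set.mem_union, Nat.lt_succ_iff_lt_or_eq]
      constructor
      · rintro ⟨i, hi | rfl, hx⟩
        · exact Or.inl ⟨i, hi, hx⟩
        · exact Or.inr hx
      · rintro (⟨i, hi, hx⟩ | hx)
        · exact ⟨i, Or.inl hi, hx⟩
        · exact ⟨n, Or.inr rfl, hx⟩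
    rw [hU]
    have key := Set.ncard_union_add_ncard_inter (⋃ i, ⋃ (_ : i < n), A i) (A n)
      (Set.toFinite _) (Set.toFinite _)
    rw [Set.inter_comm] at key
    omega

lemma count_fin {V : Type*} [Fintype V] {m : ℕ} (B : Fin (m + 1) → Set V) :
    (⋃ i, B i).ncard
      + ∑ i : Fin (m + 1), (B i ∩ ⋃ j, ⋃ (_ : j < i), B j).ncard
      = ∑ i : Fin (m + 1), (B i).ncard := by
  set B' : ℕ → Set V := fun i => ⋃ (h : i < m + 1), B ⟨i, h⟩ with hB'
  have hBeq : ∀ i : Fin (m + 1), B' i.val = B i := by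
    intro i
    simp [hB', i.isLt, Fin.is_le]
  have hbU : ∀ i : Fin (m + 1),
      (⋃ j, ⋃ (_ : j < i.val), B' j) = ⋃ j, ⋃ (_ : j < i), B j := by
    intro i; ext x
    simp only [Set.mem_iUnion, hB']
    constructor
    · rintro ⟨j, hj, h, hx⟩
      exact ⟨⟨j, h⟩, by simpa [Fin.lt_def] using hj, hx⟩
    · rintro ⟨j, hj, hx⟩
      exact ⟨j.val, hj, j.isLt, by simpa using hx⟩
  have hU : (⋃ i, ⋃ (_ : i < m + 1), B' i) = ⋃ i, B i := by
    ext x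
    simp only [Set.mem_iUnion, hB']
    constructor
    · rintro ⟨j, hj, h, hx⟩
      exact ⟨⟨j, h⟩, hx⟩
    · rintro ⟨j, hx⟩
      exact ⟨j.val, j.isLt, j.isLt, by simpa using hx⟩
  have h1 : ∑ i ∈ Finset.range (m + 1), (B' i).ncard = ∑ i : Fin (m + 1), (B i).ncard := by
    rw [← Fin.sum_univ_eq_sum_range (fun i => (B' i).ncard) (m + 1)]
    exact Finset.sum_congr rfl fun i _ => by rw [hBeq]
  have h2 : ∑ i ∈ Finset.range (m + 1), (B' i ∩ ⋃ j, ⋃ (_ : j < i), B' j).ncard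
      = ∑ i : Fin (m + 1), (B i ∩ ⋃ j, ⋃ (_ : j < i), B j).ncard := by
    rw [← Fin.sum_univ_eq_sum_range (fun i => (B' i ∩ ⋃ j, ⋃ (_ : j < i), B' j).ncard) (m + 1)]
    exact Finset.sum_congr rfl fun i _ => by rw [hBeq, hbU]
  have := count_nat B' (m + 1)
  rw [hU, h1, h2] at this
  exact this

lemma subgraph_edge_ncard {V : Type*} {G : SimpleGraph V} (K : G.Subgraph) :
    K.coe.edgeSet.ncard = K.edgeSet.ncard := by
  rw [← Subgraph.image_coe_edgeSet_coe,
    Set.ncard_image_of_injective _ (Sym2.map.injective Subtype.val_injective)]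

lemma three_le_of_iso_cycle {W : Type*} {G' : SimpleGraph W} {n : ℕ}
    (e : G' ≃g cycleGraph n) (h3 : 3 ≤ G'.edgeSet.ncard) : 3 ≤ n := by
  have hcard : G'.edgeSet.ncard = (cycleGraph n).edgeSet.ncard := by
    rw [← Nat.card_coe_set_eq, ← Nat.card_coe_set_eq]
    exact Nat.card_congr e.mapEdgeSet
  rw [hcard] at h3
  by_contra h
  interval_cases n
  · rw [cycleGraph_zero_eq_bot, edgeSet_bot] at h3; simp at h3
  · rw [cycleGraph_one_eq_bot, edgeSet_bot] at h3; simp at h3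
  · have : (cycleGraph 2).edgeSet = {s(0, 1)} := by
      rw [cycleGraph_two_eq_top, edgeSet_top]
      ext e
      induction e with
      | _ u v => fin_cases u <;> fin_cases v <;> simp <;> decide
    rw [this, Set.ncard_singleton] at h3
    omega

lemma subgraph_cycle_deg {V : Type*} {G : SimpleGraph V} {K : G.Subgraph} {n : ℕ}
    (e : K.coe ≃g cycleGraph n) (hn : 3 ≤ n) {v : V} (hv : v ∈ K.verts) :
    (K.neighborSet v).ncard = 2 := by
  obtain ⟨k, rfl⟩ : ∃ k, n = k + 3 := ⟨n - 3, by omega⟩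
  rw [← Nat.card_coe_set_eq,
    Nat.card_congr ((Subgraph.coeNeighborSetEquiv ⟨v, hv⟩).symm.trans
      (e.mapNeighborSet ⟨v, hv⟩)),
    Nat.card_coe_set_eq, cycleGraph_neighborSet]
  refine Set.ncard_pair ?_
  simp only [ne_eq, sub_eq_iff_eq_add, add_assoc (e ⟨v, hv⟩), left_eq_add]
  exact ne_of_beq_false rfl

/-- Lemma 4.3: if all ears of an ear decomposition are cycles, then any permutation of the
ears in which each ear meets the union of the previous ones is again an ear decomposition. -/
theorem ear_permute {V : Type*} [Fintype V] (G : SimpleGraph V)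
    (hG : G.Hypomatchable) {m : ℕ} (H : Fin (m + 1) → G.Subgraph)
    (hH : IsEarDecomposition G H)
    (hcyc : ∀ i, ∃ n, Nonempty ((H i).coe ≃g SimpleGraph.cycleGraph n))
    (σ : Equiv.Perm (Fin (m + 1)))
    (hσ : ∀ l : Fin (m + 1), 0 < l.val →
      ((H (σ l)).verts ∩ ⋃ j, ⋃ (_ : j < l), (H (σ j)).verts).Nonempty) :
    IsEarDecomposition G (fun l => H (σ l)) := by
  obtain ⟨hdisj, hcov, hodd, hc0, hE4⟩ := hH
  have hcovσ : (⋃ l, (H (σ l)).verts) = Set.univ := by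
    exact (Function.Surjective.iUnion_comp σ.surjective fun i => (H i).verts).trans hcov
  -- the intersection counts
  set t : Fin (m + 1) → ℕ :=
    fun i => ((H i).verts ∩ ⋃ j, ⋃ (_ : j < i), (H j).verts).ncard with ht
  set s : Fin (m + 1) → ℕ :=
    fun l => ((H (σ l)).verts ∩ ⋃ j, ⋃ (_ : j < l), (H (σ j)).verts).ncard with hs
  have hzero : ∀ i : Fin (m + 1), (⋃ j, ⋃ (_ : j < i), (H (σ j)).verts) = ∅ → True := fun _ _ => trivial
  have hlt0 : ∀ (f : Fin (m + 1) → Set V), (⋃ j, ⋃ (_ : j < (0 : Fin (m + 1))), f j) = ∅ := by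
    intro f; simp [Fin.not_lt_zero]
  have ht0 : t 0 = 0 := by rw [ht]; simp only [hlt0]; simp
  have hs0 : s 0 = 0 := by rw [hs]; simp only [hlt0]; simp
  have hcount1 := count_fin (fun i => (H i).verts)
  have hcount2 := count_fin (fun l => (H (σ l)).verts)
  rw [hcov] at hcount1
  rw [hcovσ] at hcount2
  have hsum_eq : ∑ l : Fin (m + 1), (H (σ l)).verts.ncard
      = ∑ i : Fin (m + 1), (H i).verts.ncard := by
    simpa using Equiv.sum_comp σ (fun i => (H i).verts.ncard)
  have hcount1' : Set.univ.ncard + ∑ i : Fin (m + 1), t i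
      = ∑ i : Fin (m + 1), (H i).verts.ncard := hcount1
  have hcount2' : Set.univ.ncard + ∑ l : Fin (m + 1), s l
      = ∑ l : Fin (m + 1), (H (σ l)).verts.ncard := hcount2
  have hts : ∑ l : Fin (m + 1), s l = ∑ i : Fin (m + 1), t i := by
    rw [hsum_eq] at hcount2'; omega
  -- each t i ≤ 1 for i ≠ 0
  have htle : ∀ i : Fin (m + 1), 0 < i.val → t i ≤ 1 := by
    intro i hi
    rcases hE4 i hi with ⟨_, hiff⟩ | ⟨_, h1⟩
    · have hempty : ((H i).verts ∩ ⋃ j, ⋃ (_ : j < i), (H j).verts) = ∅ := by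
        ext v
        simp only [Set.mem_inter_iff, Set.mem_empty_iff_false, iff_false, not_and]
        intro hv hmem
        obtain ⟨n, ⟨e⟩⟩ := hcyc i
        have hn := three_le_of_iso_cycle e
          (by rw [subgraph_edge_ncard]; exact (hodd i).2)
        have h1 := (hiff v hv).mp hmem
        rw [subgraph_cycle_deg e hn hv] at h1
        omega
      rw [ht]; simp only [hempty]; simp
    · rw [ht]; simp only [h1]
      omega
  -- sum of t ≤ m
  have hmem0 : (0 : Fin (m + 1)) ∈ (Finset.univ : Finset (Fin (m + 1))) := Finset.mem_univ _
  have hcard : ((Finset.univ : Finset (Fin (m + 1))).erase 0).card = m := by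
    rw [Finset.card_erase_of_mem hmem0, Finset.card_univ, Fintype.card_fin]; omega
  have htsum : ∑ i : Fin (m + 1), t i ≤ m := by
    have h1 := Finset.sum_erase_add (Finset.univ : Finset (Fin (m + 1))) t hmem0
    have h2 : ∑ i ∈ (Finset.univ : Finset (Fin (m + 1))).erase 0, t i
        ≤ ∑ i ∈ (Finset.univ : Finset (Fin (m + 1))).erase 0, 1 := by
      refine Finset.sum_le_sum fun i hi => htle i ?_
      have := Finset.ne_of_mem_erase hi
      exact Nat.pos_of_ne_zero fun h0 => this (Fin.ext h0)
    rw [Finset.sum_const, hcard, smul_eq_mul, mul_one] at h2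
    omega
  -- each s l ≥ 1 for l ≠ 0
  have hsge : ∀ l : Fin (m + 1), 0 < l.val → 1 ≤ s l := by
    intro l hl
    have := hσ l hl
    rw [hs]
    exact (Set.ncard_pos (Set.toFinite _)).mpr this
  -- force s l = 1
  have hs1 : ∀ l : Fin (m + 1), 0 < l.val → s l = 1 := by
    intro l hl
    by_contra hne
    have h2le : 2 ≤ s l := by
      have := hsge l hl; omega
    have hlmem : l ∈ (Finset.univ : Finset (Fin (m + 1))).erase 0 := by
      refine Finset.mem_erase.mpr ⟨?_, Finset.mem_univ _⟩
      exact fun h0 => by simp [h0] at hl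
    have h1 := Finset.sum_erase_add ((Finset.univ : Finset (Fin (m + 1))).erase 0) s hlmem
    have h2 := Finset.sum_erase_add (Finset.univ : Finset (Fin (m + 1))) s hmem0
    have h3 : ∑ i ∈ (((Finset.univ : Finset (Fin (m + 1))).erase 0).erase l), 1
        ≤ ∑ i ∈ (((Finset.univ : Finset (Fin (m + 1))).erase 0).erase l), s i := by
      refine Finset.sum_le_sum fun i hi => ?_
      have hi0 := Finset.ne_of_mem_erase (Finset.mem_of_mem_erase hi)
      exact hsge i (Nat.pos_of_ne_zero fun h0 => hi0 (Fin.ext h0))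
    rw [Finset.sum_const, smul_eq_mul, mul_one,
      Finset.card_erase_of_mem hlmem, hcard] at h3
    have hm1 : 0 < l.val := hl
    have hmpos : 1 ≤ m := by
      have := l.isLt; omega
    omega
  -- assemble
  refine ⟨fun i j hij => hdisj (σ i) (σ j) (fun h => hij (σ.injective h)),
    hcovσ, fun l => hodd (σ l), hcyc (σ 0), fun l hl => Or.inr ⟨hcyc (σ l), hs1 l hl⟩⟩
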